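/- Fix an interval [α, β] of length h = β − α > 0. Let p be the cubic Hermite interpolant on [α,β] determined by endpoint values Q_0, Q_1 and endpoint derivatives D_0, D_1, and let p̂ be the cubic Hermite interpolant determined by perturbed data Q̂_0, Q̂_1, D̂_0, D̂_1. Then for every τ ∈ [α,β], |p̂(τ) − p(τ)| ≤ |Q̂_0 − Q_0| + |Q̂_1 − Q_1| + (4h/27)(|D̂_0 − D_0| + |D̂_1 − D_1|). -/
import Mathlib


/-- The cubic Hermite interpolant on the interval `[a, b]` determined by endpoint
values `Q0`, `Q1` and endpoint derivatives `D0`, `D1`, written in the local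
coordinate `ξ = (τ - a) / (b - a)`. -/
noncomputable def hermiteOn (a b Q0 D0 Q1 D1 : ℝ) (τ : ℝ) : ℝ :=
  let h : ℝ := b - a
  let ξ : ℝ := (τ - a) / h
  (2*ξ^3 - 3*ξ^2 + 1) * Q0 + (ξ^3 - 2*ξ^2 + ξ) * h * D0
    + (-2*ξ^3 + 3*ξ^2) * Q1 + (ξ^3 - ξ^2) * h * D1

lemma h00_bound {x : ℝ} (h0 : 0 ≤ x) (h1 : x ≤ 1) : |2*x^3 - 3*x^2 + 1| ≤ 1 := by
  rw [abs_le]; constructor <;> nlinarith [sq_nonneg x, sq_nonneg (1-x), sq_nonneg (x*(1-x))]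

lemma h10_bound {x : ℝ} (h0 : 0 ≤ x) (h1 : x ≤ 1) : |x^3 - 2*x^2 + x| ≤ 4/27 := by
  rw [abs_le]; constructor <;> nlinarith [sq_nonneg (x - 1/3), sq_nonneg (1-x), mul_nonneg h0 (sq_nonneg (x-1/3))]

lemma h01_bound {x : ℝ} (h0 : 0 ≤ x) (h1 : x ≤ 1) : |-2*x^3 + 3*x^2| ≤ 1 := by
  rw [abs_le]; constructor <;> nlinarith [sq_nonneg x, sq_nonneg (1-x), sq_nonneg (x*(1-x))]

lemma h11_bound {x : ℝ} (h0 : 0 ≤ x) (h1 : x ≤ 1) : |x^3 - x^2| ≤ 4/27 := by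
  rw [abs_le]; constructor <;> nlinarith [sq_nonneg (x - 2/3), mul_nonneg h0 (sq_nonneg (x-2/3)), sq_nonneg x]

/-- Stability of cubic Hermite interpolation on one interval:
if `p` is the cubic Hermite interpolant on `[a,b]` (of length `h = b - a > 0`) built
from data `Q0, Q1, D0, D1` and `p̂` the one built from perturbed data
`Q̂0, Q̂1, D̂0, D̂1`, then for every `τ ∈ [a,b]`,
`|p̂(τ) − p(τ)| ≤ |Q̂0 − Q0| + |Q̂1 − Q1| + (4h/27)(|D̂0 − D0| + |D̂1 − D1|)`. -/
theorem hermite_perturbation_bound (a b : ℝ) (hab : 0 < b - a)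
    (Q0 Q1 D0 D1 Qh0 Qh1 Dh0 Dh1 : ℝ) :
    ∀ τ ∈ Set.Icc a b,
      |hermiteOn a b Qh0 Dh0 Qh1 Dh1 τ - hermiteOn a b Q0 D0 Q1 D1 τ|
        ≤ |Qh0 - Q0| + |Qh1 - Q1| + 4*(b - a)/27 * (|Dh0 - D0| + |Dh1 - D1|) := by
  intro τ hτ
  obtain ⟨hta, htb⟩ := hτ
  set h : ℝ := b - a with hh
  set x : ℝ := (τ - a) / h with hx
  have hxpos : 0 ≤ x := div_nonneg (by linarith) hab.le
  have hx1 : x ≤ 1 := by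
    rw [hx, div_le_one hab]; linarith
  have key : hermiteOn a b Qh0 Dh0 Qh1 Dh1 τ - hermiteOn a b Q0 D0 Q1 D1 τ
      = (2*x^3 - 3*x^2 + 1) * (Qh0 - Q0) + (x^3 - 2*x^2 + x) * h * (Dh0 - D0)
        + (-2*x^3 + 3*x^2) * (Qh1 - Q1) + (x^3 - x^2) * h * (Dh1 - D1) := by
    simp only [hermiteOn]; ring
  rw [key]
  have t1 : |(2*x^3 - 3*x^2 + 1) * (Qh0 - Q0)| ≤ |Qh0 - Q0| := by
    rw [abs_mul]
    calc _ ≤ 1 * |Qh0 - Q0| := by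
            exact mul_le_mul_of_nonneg_right (h00_bound hxpos hx1) (abs_nonneg _)
      _ = _ := one_mul _
  have t3 : |(-2*x^3 + 3*x^2) * (Qh1 - Q1)| ≤ |Qh1 - Q1| := by
    rw [abs_mul]
    calc _ ≤ 1 * |Qh1 - Q1| := by
            exact mul_le_mul_of_nonneg_right (h01_bound hxpos hx1) (abs_nonneg _)
      _ = _ := one_mul _
  have t2 : |(x^3 - 2*x^2 + x) * h * (Dh0 - D0)| ≤ 4*h/27 * |Dh0 - D0| := by
    rw [abs_mul, abs_mul, abs_of_pos hab]
    calc |x^3 - 2*x^2 + x| * h * |Dh0 - D0| ≤ 4/27 * h * |Dh0 - D0| := by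
          gcongr; exact h10_bound hxpos hx1
      _ = 4*h/27 * |Dh0 - D0| := by ring
  have t4 : |(x^3 - x^2) * h * (Dh1 - D1)| ≤ 4*h/27 * |Dh1 - D1| := by
    rw [abs_mul, abs_mul, abs_of_pos hab]
    calc |x^3 - x^2| * h * |Dh1 - D1| ≤ 4/27 * h * |Dh1 - D1| := by
          gcongr; exact h11_bound hxpos hx1
      _ = 4*h/27 * |Dh1 - D1| := by ring
  calc |(2*x^3 - 3*x^2 + 1) * (Qh0 - Q0) + (x^3 - 2*x^2 + x) * h * (Dh0 - D0)
        + (-2*x^3 + 3*x^2) * (Qh1 - Q1) + (x^3 - x^2) * h * (Dh1 - D1)|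
      ≤ |(2*x^3 - 3*x^2 + 1) * (Qh0 - Q0)| + |(x^3 - 2*x^2 + x) * h * (Dh0 - D0)|
        + |(-2*x^3 + 3*x^2) * (Qh1 - Q1)| + |(x^3 - x^2) * h * (Dh1 - D1)| := by
          apply (abs_add_le _ _).trans
          gcongr
          apply (abs_add_le _ _).trans
          gcongr
          exact abs_add_le _ _
    _ ≤ |Qh0 - Q0| + |Qh1 - Q1| + 4*h/27 * (|Dh0 - D0| + |Dh1 - D1|) := by
          linarith
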